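/- The one-point Lindelöfication L(ω₁) of a discrete set of size ω₁ is totally Lindelöf: every filter base on L(ω₁) stable under countable intersections extends to a total filter base stable under countable intersections. -/
import Mathlib


open Set Topology

/-- A filter base on `X`: a nonempty family of subsets of `X`, not containing `∅`,
closed under pairwise intersections. -/
def FilterBaseOn (X : Type*) (F : Set (Set X)) : Prop :=
  F.Nonempty ∧ ∅ ∉ F ∧ ∀ A ∈ F, ∀ B ∈ F, A ∩ B ∈ F

/-- `F` converges to the set `W`: every open set containing `W` contains a member of `F`. -/
def ConvergesTo {X : Type*} [TopologicalSpace X] (F : Set (Set X)) (W : Set X) : Prop :=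
  ∀ U : Set X, IsOpen U → W ⊆ U → ∃ A ∈ F, A ⊆ U

/-- `F` is total: every filter base extending `F` has nonempty adherence
(intersection of the closures of all its members). -/
def TotalFB {X : Type*} [TopologicalSpace X] (F : Set (Set X)) : Prop :=
  ∀ H : Set (Set X), FilterBaseOn X H → F ⊆ H → (⋂ A ∈ H, closure A).Nonempty

/-- `F` is stable under countable intersections: every countable subfamily of `F`
has a member of `F` contained in its intersection. -/
def StableCI {X : Type*} (F : Set (Set X)) : Prop :=
  ∀ S ⊆ F, S.Countable → ∃ H ∈ F, H ⊆ ⋂₀ S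

/-- `F` is ω-closed: the intersection of any nonempty countable subfamily of `F` belongs to `F`. -/
def OmegaClosedFB {X : Type*} (F : Set (Set X)) : Prop :=
  ∀ S ⊆ F, S.Countable → S.Nonempty → ⋂₀ S ∈ F

/-- `F` is δ-stable: every nonempty countable subfamily of `F` has nonempty intersection. -/
def DeltaStableFB {X : Type*} (F : Set (Set X)) : Prop :=
  ∀ S ⊆ F, S.Countable → S.Nonempty → (⋂₀ S).Nonempty

/-- `G_δ(K)`: the family of Gδ subsets (countable intersections of open sets) containing `K`. -/
def GdeltaNbhds {X : Type*} [TopologicalSpace X] (K : Set X) : Set (Set X) :=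
  {G | K ⊆ G ∧ IsGδ G}

/-- `F ∨ G = {F₀ ∩ F₁ : F₀, F₁ ∈ F ∪ G}`. -/
def joinFB {X : Type*} (F G : Set (Set X)) : Set (Set X) :=
  {A | ∃ F₀ ∈ F ∪ G, ∃ F₁ ∈ F ∪ G, A = F₀ ∩ F₁}

/-- `X` is totally Lindelöf: every filter base stable under countable intersections
extends to a total filter base stable under countable intersections. -/
def TotallyLindelofSpace (X : Type*) [TopologicalSpace X] : Prop :=
  ∀ F : Set (Set X), FilterBaseOn X F → StableCI F →
    ∃ H : Set (Set X), FilterBaseOn X H ∧ StableCI H ∧ F ⊆ H ∧ TotalFB H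

/-- `X` is Alster: every cover of `X` by Gδ sets such that every compact subset of `X`
is contained in a single member admits a countable subcover. -/
def AlsterSpace (X : Type*) [TopologicalSpace X] : Prop :=
  ∀ 𝒢 : Set (Set X), (∀ G ∈ 𝒢, IsGδ G) → (∀ K : Set X, IsCompact K → ∃ G ∈ 𝒢, K ⊆ G) →
    ∃ 𝒞 ⊆ 𝒢, 𝒞.Countable ∧ ⋃₀ 𝒞 = Set.univ

/-- `D` is a discrete subset: each of its points has an open neighborhood meeting `D`
only in that point. -/
def IsDiscreteSubset {X : Type*} [TopologicalSpace X] (D : Set X) : Prop :=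
  ∀ a ∈ D, ∃ U : Set X, IsOpen U ∧ U ∩ D = {a}

/-- The first uncountable ordinal ω₁. -/
noncomputable def omega1 : Ordinal := (Cardinal.aleph 1).ord

/-- The underlying set of `L(ω₁)`: the ordinals `≤ ω₁`. -/
def Lomega1 : Type _ := {o : Ordinal // o ≤ omega1}

/-- The top point `ω₁` of `L(ω₁)`. -/
noncomputable def Lomega1.top : Lomega1 := ⟨omega1, le_refl _⟩

/-- The topology of the one-point Lindelöfication `L(ω₁)`: every point `α < ω₁` is isolated,
and the neighborhoods of the point `ω₁` are the sets containing it with countable complement. -/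
instance : TopologicalSpace Lomega1 :=
  TopologicalSpace.generateFrom
    ({U | ∃ x : Lomega1, x.1 < omega1 ∧ U = {x}} ∪
     {U | Lomega1.top ∈ U ∧ {x : Lomega1 | x ∉ U}.Countable})

lemma Lomega1.isOpen_cocount {N : Set Lomega1} (h1 : Lomega1.top ∈ N)
    (h2 : Nᶜ.Countable) : IsOpen N :=
  TopologicalSpace.GenerateOpen.basic _ (Or.inr ⟨h1, h2⟩)

lemma Lomega1.cocount_of_open {U : Set Lomega1} (hU : IsOpen U)
    (ht : Lomega1.top ∈ U) : Uᶜ.Countable := by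
  induction hU with
  | basic V hV =>
    rcases hV with ⟨x, hx, rfl⟩ | ⟨_, hc⟩
    · rw [Set.mem_singleton_iff] at ht
      rw [← ht] at hx
      exact absurd hx (lt_irrefl _)
    · exact hc
  | univ => simp
  | inter U V _ _ ihU ihV =>
    rw [Set.compl_inter]
    exact (ihU ht.1).union (ihV ht.2)
  | sUnion S _ ih =>
    obtain ⟨U, hUS, hxU⟩ := ht
    exact (ih U hUS hxU).mono (Set.compl_subset_compl.2 (Set.subset_sUnion_of_mem hUS))

theorem stmt4 : TotallyLindelofSpace Lomega1 := by
  intro F hF hFci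
  obtain ⟨hFne, hFemp, hFinter⟩ := hF
  by_cases hp : ∃ p : Lomega1, ∀ A ∈ F, p ∈ A
  · -- principal filter at p
    obtain ⟨p, hp⟩ := hp
    refine ⟨{A | p ∈ A}, ⟨⟨Set.univ, trivial⟩, fun h => h, fun A hA B hB => ⟨hA, hB⟩⟩,
      ?_, fun A hA => hp A hA, ?_⟩
    · intro S hS _
      exact ⟨{p}, rfl, fun x hx => by
        rw [Set.mem_sInter]; intro t ht; exact hx ▸ hS ht⟩
    · intro H hH hsub
      refine ⟨p, Set.mem_iInter₂.2 fun A hA => subset_closure ?_⟩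
      have h1 : A ∩ {p} ∈ H := hH.2.2 A hA _ (hsub rfl)
      by_contra hpA
      exact hH.2.1 (by simpa [Set.inter_singleton_eq_empty.2 hpA] using h1)
  · -- every member of F is uncountable
    push_neg at hp
    have huncount : ∀ A ∈ F, ¬ A.Countable := by
      intro A hA hAc
      choose B hBmem hBnot using hp
      obtain ⟨H₀, hH₀, hH₀sub⟩ := hFci (B '' A) (by rintro _ ⟨p, _, rfl⟩; exact hBmem p)
        (hAc.image B)
      have : H₀ ∩ A = ∅ := by
        ext x; simp only [Set.mem_inter_iff, Set.mem_empty_iff_false, iff_false]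
        rintro ⟨hxH, hxA⟩
        exact hBnot x (hH₀sub hxH _ ⟨x, hxA, rfl⟩)
      exact hFemp (this ▸ hFinter H₀ hH₀ A hA)
    -- H = {A ∩ N | A ∈ F, N cocountable containing top}
    set C : Set (Set Lomega1) := {N | Lomega1.top ∈ N ∧ Nᶜ.Countable} with hC
    refine ⟨{S | ∃ A ∈ F, ∃ N ∈ C, S = A ∩ N}, ⟨?_, ?_, ?_⟩, ?_, ?_, ?_⟩
    · obtain ⟨A, hA⟩ := hFne
      exact ⟨A, A, hA, Set.univ, ⟨trivial, by simp⟩, by simp⟩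
    · rintro ⟨A, hA, N, hN, hemp⟩
      have : A ⊆ Nᶜ := fun x hx => by
        intro hxN
        have : x ∈ A ∩ N := ⟨hx, hxN⟩
        rw [← hemp] at this; exact this
      exact huncount A hA (hN.2.mono this)
    · rintro _ ⟨A, hA, N, hN, rfl⟩ _ ⟨B, hB, M, hM, rfl⟩
      refine ⟨A ∩ B, hFinter A hA B hB, N ∩ M, ⟨⟨hN.1, hM.1⟩, ?_⟩, by
        ext x; simp only [Set.mem_inter_iff]; tauto⟩
      rw [Set.compl_inter]; exact hN.2.union hM.2
    · -- StableCI
      intro S hS hSc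
      rcases S.eq_empty_or_nonempty with rfl | hSne
      · obtain ⟨A, hA⟩ := hFne
        exact ⟨A ∩ Set.univ, ⟨A, hA, Set.univ, ⟨trivial, by simp⟩, rfl⟩, by simp⟩
      · choose! A hAF N hNC hAN using fun s (hs : s ∈ S) => hS hs
        obtain ⟨H₀, hH₀, hH₀sub⟩ := hFci (A '' S)
          (by rintro _ ⟨s, hs, rfl⟩; exact hAF s hs) (hSc.image A)
        set M := ⋂ s ∈ S, N s with hM
        have hMC : M ∈ C := by
          constructor
          · exact Set.mem_iInter₂.2 fun s hs => (hNC s hs).1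
          · rw [hM, Set.compl_iInter₂]
            exact (Set.Countable.biUnion hSc fun s hs => (hNC s hs).2)
        refine ⟨H₀ ∩ M, ⟨H₀, hH₀, M, hMC, rfl⟩, ?_⟩
        intro x hx
        rw [Set.mem_sInter]
        intro t ht
        rw [hAN t ht]
        exact ⟨hH₀sub hx.1 _ ⟨t, ht, rfl⟩, Set.mem_iInter₂.1 hx.2 t ht⟩
    · -- F ⊆ H
      intro A hA
      exact ⟨A, hA, Set.univ, ⟨trivial, by simp⟩, by simp⟩
    · -- total
      intro H' hH' hsub
      refine ⟨Lomega1.top, Set.mem_iInter₂.2 fun A hA => ?_⟩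
      rw [mem_closure_iff]
      intro U hU htU
      by_contra hcon
      rw [Set.not_nonempty_iff_eq_empty] at hcon
      have hAc : A ⊆ Uᶜ := fun x hx hxU => by
        have : x ∈ U ∩ A := ⟨hxU, hx⟩
        rw [hcon] at this; exact this
      have hAcount : A.Countable := (Lomega1.cocount_of_open hU htU).mono hAc
      have htA : Lomega1.top ∉ A := fun h => hAc h htU
      -- Aᶜ is a cocountable nbhd of top; combine with some member of F
      obtain ⟨B, hB⟩ := hFne
      have hBA : B ∩ Aᶜ ∈ H' := hsub ⟨B, hB, Aᶜ, ⟨htA, by simpa using hAcount⟩, rfl⟩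
      have : A ∩ (B ∩ Aᶜ) ∈ H' := hH'.2.2 A hA _ hBA
      have hemp : A ∩ (B ∩ Aᶜ) = ∅ := by
        ext x; simp only [Set.mem_inter_iff, Set.mem_compl_iff, Set.mem_empty_iff_false,
          iff_false]; tauto
      exact hH'.2.1 (hemp ▸ this)
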